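/- For every m ≥ 0, the Schur polynomial A_m agrees with the Rogers–Ramanujan series G through degree m−1: viewing both as elements of the formal power series ring ℤ⟦q⟧, one has G(q) − A_m(q) ∈ q^m·ℤ⟦q⟧, i.e. the coefficient of q^j in A_m equals the coefficient of q^j in G for all 0 ≤ j < m. -/

import Mathlib

noncomputable section

open PowerSeries

/-- `(q;q)_n = ∏_{j=1}^n (1 - q^j)` in `ℤ⟦q⟧`; its constant term is `1`, so it is
invertible in `ℤ⟦q⟧`. -/
def qqPoch (n : ℕ) : PowerSeries ℤ :=
  ∏ j ∈ Finset.range n, (1 - (PowerSeries.X : PowerSeries ℤ) ^ (j + 1))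

/-- The Gaussian binomial coefficient `[r choose n]_q = (q;q)_r/((q;q)_n (q;q)_{r-n})`
for `0 ≤ n ≤ r`, and `0` otherwise. -/
def qBinom (r n : ℕ) : PowerSeries ℤ :=
  if n ≤ r then qqPoch r * PowerSeries.invOfUnit (qqPoch n * qqPoch (r - n)) 1 else 0

/-- The Schur polynomial `A_m(q) = Σ_{n≥0} q^{n²} [m−n choose n]_q`. -/
def schurA (m : ℕ) : PowerSeries ℤ :=
  ∑ n ∈ Finset.range (m + 1), (PowerSeries.X : PowerSeries ℤ) ^ (n ^ 2) * qBinom (m - n) n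

/-- The Rogers–Ramanujan series `G(q) = Σ_{n≥0} q^{n²}/(q;q)_n ∈ ℤ⟦q⟧`, defined
coefficientwise: the coefficient of `q^j` only involves the terms with `n² ≤ j`,
so the partial sum over `n ≤ j` determines it. -/
def RRGseries : PowerSeries ℤ :=
  PowerSeries.mk fun j => PowerSeries.coeff j
    (∑ n ∈ Finset.range (j + 1),
      (PowerSeries.X : PowerSeries ℤ) ^ (n ^ 2) * PowerSeries.invOfUnit (qqPoch n) 1)

lemma constCoeff_qqPoch (n : ℕ) : constantCoeff (qqPoch n) = 1 := by
  simp [qqPoch, map_prod]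

lemma qqPoch_mul_inv (n : ℕ) : qqPoch n * PowerSeries.invOfUnit (qqPoch n) 1 = 1 :=
  PowerSeries.mul_invOfUnit _ 1 (by simp [constCoeff_qqPoch])

lemma my_inv_unique {a b c : PowerSeries ℤ} (hb : a * b = 1) (hc : a * c = 1) : b = c := by
  calc b = b * (a * c) := by rw [hc, mul_one]
  _ = (a * b) * c := by ring
  _ = c := by rw [hb, one_mul]

lemma qq_invOfUnit_mul (n k : ℕ) :
    PowerSeries.invOfUnit (qqPoch n * qqPoch k) 1 =
      PowerSeries.invOfUnit (qqPoch n) 1 * PowerSeries.invOfUnit (qqPoch k) 1 := by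
  apply my_inv_unique (a := qqPoch n * qqPoch k)
  · exact PowerSeries.mul_invOfUnit _ 1 (by simp [constCoeff_qqPoch])
  · calc qqPoch n * qqPoch k * (PowerSeries.invOfUnit (qqPoch n) 1 * PowerSeries.invOfUnit (qqPoch k) 1)
        = (qqPoch n * PowerSeries.invOfUnit (qqPoch n) 1) *
          (qqPoch k * PowerSeries.invOfUnit (qqPoch k) 1) := by ring
    _ = 1 := by rw [qqPoch_mul_inv, qqPoch_mul_inv, mul_one]

lemma prod_sub_one_dvd (k : ℕ) (s : Finset ℕ) (h : ∀ j ∈ s, k ≤ j + 1) :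
    (PowerSeries.X : PowerSeries ℤ) ^ k ∣ (∏ j ∈ s, (1 - (PowerSeries.X : PowerSeries ℤ) ^ (j + 1))) - 1 := by
  induction s using Finset.induction_on with
  | empty => simp
  | @insert a s ha ih =>
    rw [Finset.prod_insert ha]
    have h1 : (PowerSeries.X : PowerSeries ℤ) ^ k ∣ (1 - (X : PowerSeries ℤ) ^ (a + 1)) - 1 := by
      simpa using (dvd_neg.mpr (pow_dvd_pow (X : PowerSeries ℤ) (h a (Finset.mem_insert_self a s))))
    have h2 := ih (fun j hj => h j (Finset.mem_insert_of_mem hj))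
    have : (1 - (X : PowerSeries ℤ) ^ (a + 1)) * (∏ j ∈ s, (1 - (X : PowerSeries ℤ) ^ (j + 1))) - 1
        = ((1 - (X : PowerSeries ℤ) ^ (a + 1)) - 1) * (∏ j ∈ s, (1 - (X : PowerSeries ℤ) ^ (j + 1)))
          + ((∏ j ∈ s, (1 - (X : PowerSeries ℤ) ^ (j + 1))) - 1) := by ring
    rw [this]
    exact dvd_add (h1.mul_right _) h2

lemma key_dvd (r n : ℕ) (h : n ≤ r) :
    (PowerSeries.X : PowerSeries ℤ) ^ (r - n + 1) ∣
      qBinom r n - PowerSeries.invOfUnit (qqPoch n) 1 := by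
  have hsplit : qqPoch (r - n) * (∏ j ∈ Finset.Ico (r - n) r, (1 - (X : PowerSeries ℤ) ^ (j + 1))) = qqPoch r := by
    rw [qqPoch, qqPoch, Finset.range_eq_Ico, Finset.range_eq_Ico]
    exact Finset.prod_Ico_consecutive (fun j => (1 - (X : PowerSeries ℤ) ^ (j + 1))) (Nat.zero_le _) (Nat.sub_le r n)
  set P := ∏ j ∈ Finset.Ico (r - n) r, (1 - (X : PowerSeries ℤ) ^ (j + 1)) with hP
  have hq : qBinom r n = P * PowerSeries.invOfUnit (qqPoch n) 1 := by
    rw [qBinom, if_pos h, qq_invOfUnit_mul]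
    calc qqPoch r * (PowerSeries.invOfUnit (qqPoch n) 1 * PowerSeries.invOfUnit (qqPoch (r - n)) 1)
        = (qqPoch (r - n) * P) * (PowerSeries.invOfUnit (qqPoch n) 1 * PowerSeries.invOfUnit (qqPoch (r - n)) 1) := by
          rw [hsplit]
      _ = (qqPoch (r - n) * PowerSeries.invOfUnit (qqPoch (r - n)) 1) * (P * PowerSeries.invOfUnit (qqPoch n) 1) := by ring
      _ = P * PowerSeries.invOfUnit (qqPoch n) 1 := by rw [qqPoch_mul_inv, one_mul]
  rw [hq]
  have : P * PowerSeries.invOfUnit (qqPoch n) 1 - PowerSeries.invOfUnit (qqPoch n) 1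
      = (P - 1) * PowerSeries.invOfUnit (qqPoch n) 1 := by ring
  rw [this]
  refine Dvd.dvd.mul_right ?_ _
  exact prod_sub_one_dvd _ _ (fun j hj => by
    have := (Finset.mem_Ico.mp hj).1; omega)

lemma coeff_eq (m j : ℕ) (hj : j < m) :
    PowerSeries.coeff j (schurA m) = PowerSeries.coeff j RRGseries := by
  have hR : PowerSeries.coeff j RRGseries
      = ∑ n ∈ Finset.range (j + 1), PowerSeries.coeff j
          ((X : PowerSeries ℤ) ^ (n ^ 2) * PowerSeries.invOfUnit (qqPoch n) 1) := by
    simp [RRGseries, PowerSeries.coeff_mk, map_sum]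
  have hR2 : PowerSeries.coeff j RRGseries
      = ∑ n ∈ Finset.range (m + 1), PowerSeries.coeff j
          ((X : PowerSeries ℤ) ^ (n ^ 2) * PowerSeries.invOfUnit (qqPoch n) 1) := by
    rw [hR]
    apply Finset.sum_subset
    · intro x hx
      simp only [Finset.mem_range] at *
      omega
    · intro x _ hx
      simp only [Finset.mem_range, not_lt] at hx
      have : j < x ^ 2 := by nlinarith
      exact PowerSeries.X_pow_dvd_iff.mp (Dvd.intro _ rfl) j this
  rw [hR2, schurA, map_sum]
  apply Finset.sum_congr rfl
  intro n _
  by_cases hn : j < n ^ 2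
  · rw [PowerSeries.X_pow_dvd_iff.mp (Dvd.intro _ rfl) j hn,
      PowerSeries.X_pow_dvd_iff.mp (Dvd.intro _ rfl) j hn]
  · push_neg at hn
    have h2n : 2 * n ≤ m := by nlinarith [sq_nonneg (n - 1), Nat.sub_le n 1]
    have hnm : n ≤ m - n := by omega
    have hd := key_dvd (m - n) n hnm
    have hd2 : (X : PowerSeries ℤ) ^ (n ^ 2 + (m - n - n + 1)) ∣
        (X : PowerSeries ℤ) ^ (n ^ 2) * (qBinom (m - n) n - PowerSeries.invOfUnit (qqPoch n) 1) := by
      rw [pow_add]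
      exact mul_dvd_mul_left _ hd
    have hj2 : j < n ^ 2 + (m - n - n + 1) := by
      have : 2 * n ≤ n ^ 2 + 1 := by nlinarith [Nat.sub_le n 1]
      omega
    have := PowerSeries.X_pow_dvd_iff.mp hd2 j hj2
    rw [mul_sub] at this
    rw [map_sub] at this
    linarith [this]

/-- `A_m` agrees with `G` through degree `m−1`:  `G − A_m ∈ q^m ℤ⟦q⟧`, i.e. the
coefficients of `q^j` in `A_m` and in `G` coincide for all `j < m`. -/
theorem schurA_agrees_with_RRG (m : ℕ) :
    (PowerSeries.X : PowerSeries ℤ) ^ m ∣ RRGseries - schurA m ∧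
    ∀ j : ℕ, j < m → PowerSeries.coeff j (schurA m) = PowerSeries.coeff j RRGseries := by
  constructor
  · rw [PowerSeries.X_pow_dvd_iff]
    intro j hj
    rw [map_sub, coeff_eq m j hj, sub_self]
  · exact coeff_eq m
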